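/- There exists an instance of a star graph and two agents with identical binary additive utilities that admits a connected allocation which is PMMS but not EF1. -/

import Mathlib

namespace GraphFair

variable {V : Type*}

/-- A bundle is connected if it is empty or induces a connected subgraph of `G`. -/
def BundleConn (G : SimpleGraph V) (B : Finset V) : Prop :=
  B = ∅ ∨ (G.induce (B : Set V)).Connected

/-- A connected allocation of all the items among `n` agents: the bundles cover `V`,
are pairwise disjoint, and each bundle is connected in `G`. -/
def IsConnAlloc (G : SimpleGraph V) {n : ℕ} (A : Fin n → Finset V) : Prop :=
  (∀ v : V, ∃ i, v ∈ A i) ∧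
  (∀ i j : Fin n, i ≠ j → Disjoint (A i) (A j)) ∧
  (∀ i, BundleConn G (A i))

variable [DecidableEq V]

/-- Partitions of `X` into two bundles, each connected in the induced subgraph `G[X]`
(for `Y ⊆ X`, connectivity of `Y` in `G[X]` is the same as connectivity of `Y` in `G`). -/
def Part2 (G : SimpleGraph V) (X : Finset V) : Set (Finset V × Finset V) :=
  {p | p.1 ∪ p.2 = X ∧ Disjoint p.1 p.2 ∧ BundleConn G p.1 ∧ BundleConn G p.2}

/-- The pairwise maximin share of a bundle `X` with respect to utility `u`:
the maximum over partitions of `X` into two connected bundles of the minimum utility. -/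
noncomputable def pmms (G : SimpleGraph V) (u : Finset V → ℝ) (X : Finset V) : ℝ :=
  sSup ((fun p : Finset V × Finset V => min (u p.1) (u p.2)) '' Part2 G X)

/-- The `n`-agent maximin share of the whole vertex set: maximum over partitions of `V`
into `n` connected bundles of the minimum utility of a bundle. -/
noncomputable def mms (G : SimpleGraph V) (u : Finset V → ℝ) (n : ℕ) : ℝ :=
  sSup ((fun A : Fin n → Finset V => ⨅ i, u (A i)) '' {A | IsConnAlloc G A})

/-- Agents `i` and `j` are adjacent under allocation `A`. -/
def AdjUnder (G : SimpleGraph V) {n : ℕ} (A : Fin n → Finset V) (i j : Fin n) : Prop :=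
  ∃ v ∈ A i, ∃ w ∈ A j, G.Adj v w

/-- An allocation is `α`-PMMS if every agent with an empty bundle, and every agent with
respect to each of her neighbours, receives at least `α` times her pairwise maximin share. -/
def IsAlphaPMMS (G : SimpleGraph V) {n : ℕ} (u : Fin n → Finset V → ℝ)
    (A : Fin n → Finset V) (α : ℝ) : Prop :=
  ∀ i j : Fin n, i ≠ j → (A i = ∅ ∨ AdjUnder G A i j) →
    α * pmms G (u i) (A i ∪ A j) ≤ u i (A i)

/-- An allocation is `α`-MMS if every agent receives at least `α` times her maximin share. -/
def IsAlphaMMS (G : SimpleGraph V) {n : ℕ} (u : Fin n → Finset V → ℝ)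
    (A : Fin n → Finset V) (α : ℝ) : Prop :=
  ∀ i : Fin n, α * mms G (u i) n ≤ u i (A i)

/-- An additive (nonnegative) utility function. -/
def AdditiveUtil (u : Finset V → ℝ) : Prop :=
  (∀ X : Finset V, u X = ∑ v ∈ X, u {v}) ∧ ∀ v : V, 0 ≤ u {v}

/-- A binary additive utility function. -/
def BinaryAdditiveUtil (u : Finset V → ℝ) : Prop :=
  (∀ X : Finset V, u X = ∑ v ∈ X, u {v}) ∧ ∀ v : V, u {v} = 0 ∨ u {v} = 1

/-- A monotone (nonnegative) utility function. -/
def MonotoneUtil (u : Finset V → ℝ) : Prop :=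
  (∀ X Y : Finset V, X ⊆ Y → u X ≤ u Y) ∧ 0 ≤ u ∅

/-- An allocation is `α`-EF1. -/
def IsAlphaEF1 {n : ℕ} (u : Fin n → Finset V → ℝ) (A : Fin n → Finset V) (α : ℝ) : Prop :=
  ∀ i j : Fin n, i ≠ j → A j ≠ ∅ → ∃ v ∈ A j, α * u i ((A j).erase v) ≤ u i (A i)

/-- An allocation is EFX (envy-free up to any item). -/
def IsEFX {n : ℕ} (u : Fin n → Finset V → ℝ) (A : Fin n → Finset V) : Prop :=
  ∀ i j : Fin n, i ≠ j → A j ≠ ∅ → ∀ v ∈ A j, u i ((A j).erase v) ≤ u i (A i)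

/-- The number of agents receiving positive utility. -/
noncomputable def nashCount {n : ℕ} (u : Fin n → Finset V → ℝ) (A : Fin n → Finset V) : ℕ :=
  (Finset.univ.filter fun i : Fin n => 0 < u i (A i)).card

/-- The product of the positive utilities. -/
noncomputable def nashProd {n : ℕ} (u : Fin n → Finset V → ℝ) (A : Fin n → Finset V) : ℝ :=
  ∏ i ∈ Finset.univ.filter (fun i : Fin n => 0 < u i (A i)), u i (A i)

/-- A maximum Nash welfare (MNW) connected allocation: maximizes the number of agents with
positive utility and, subject to that, the product of the positive utilities. -/
def IsMNW (G : SimpleGraph V) {n : ℕ} (u : Fin n → Finset V → ℝ)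
    (A : Fin n → Finset V) : Prop :=
  IsConnAlloc G A ∧
  (∀ B : Fin n → Finset V, IsConnAlloc G B → nashCount u B ≤ nashCount u A) ∧
  (∀ B : Fin n → Finset V, IsConnAlloc G B →
    nashCount u B = nashCount u A → nashProd u B ≤ nashProd u A)

/-- `A'` is a Pareto-improvement of `A`. -/
def ParetoImproves {n : ℕ} (u : Fin n → Finset V → ℝ) (A' A : Fin n → Finset V) : Prop :=
  (∀ i, u i (A i) ≤ u i (A' i)) ∧ ∃ j, u j (A j) < u j (A' j)

/-- A connected allocation is Pareto-optimal if no connected allocation Pareto-improves it. -/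
def IsParetoOptimal (G : SimpleGraph V) {n : ℕ} (u : Fin n → Finset V → ℝ)
    (A : Fin n → Finset V) : Prop :=
  ∀ B : Fin n → Finset V, IsConnAlloc G B → ¬ ParetoImproves u B A

/-- The vector of agents' utilities rearranged in increasing order. -/
noncomputable def sortedUtils {n : ℕ} (u : Fin n → Finset V → ℝ)
    (A : Fin n → Finset V) : List ℝ :=
  (((Finset.univ : Finset (Fin n)).val.map fun i => u i (A i)).sort (· ≤ ·))

/-- `A'` is a leximin improvement of `A`: the sorted utility vector of `A'` is
lexicographically greater than that of `A`. -/
def LeximinImproves {n : ℕ} (u : Fin n → Finset V → ℝ) (A' A : Fin n → Finset V) : Prop :=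
  List.Lex (· < ·) (sortedUtils u A) (sortedUtils u A')

/-- A connected leximin allocation. -/
def IsLeximin (G : SimpleGraph V) {n : ℕ} (u : Fin n → Finset V → ℝ)
    (A : Fin n → Finset V) : Prop :=
  IsConnAlloc G A ∧ ∀ B : Fin n → Finset V, IsConnAlloc G B → ¬ LeximinImproves u B A

/-- `G` is a star: there is a central vertex adjacent to exactly all other vertices. -/
def IsStar (G : SimpleGraph V) : Prop :=
  ∃ c : V, ∀ a b : V, G.Adj a b ↔ a ≠ b ∧ (a = c ∨ b = c)

/-- A submodular utility function. -/
def SubmodularUtil (u : Finset V → ℝ) : Prop :=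
  ∀ X Y : Finset V, u (X ∪ Y) + u (X ∩ Y) ≤ u X + u Y

/-- A utility function with binary marginal gains (and `u ∅ = 0`). -/
def BinaryMarginalGains (u : Finset V → ℝ) : Prop :=
  u ∅ = 0 ∧ ∀ (X : Finset V) (v : V),
    u (insert v X) - u X = 0 ∨ u (insert v X) - u X = 1

/-- On the path with `m` vertices (edges numbered `1, …, m-1` from left to right),
`itv m x y` is the bundle `[x, y]` of all vertices between positions `x` and `y`. -/
def itv (m x y : ℕ) : Finset (Fin m) :=
  Finset.univ.filter fun v : Fin m => x ≤ v.val ∧ v.val < y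

end GraphFair

namespace StarEx
open GraphFair

def Gs : SimpleGraph (Fin 5) where
  Adj a b := a ≠ b ∧ (a = 0 ∨ b = 0)
  symm := ⟨by rintro a b ⟨h1, h2⟩; exact ⟨h1.symm, h2.symm⟩⟩
  loopless := ⟨by rintro a ⟨h, _⟩; exact h rfl⟩

noncomputable def us (X : Finset (Fin 5)) : ℝ :=
  ∑ v ∈ X, (if v = (0 : Fin 5) then (0:ℝ) else 1)

lemma us_singleton (v : Fin 5) : us {v} = if v = 0 then (0:ℝ) else 1 := by
  simp [us]

lemma conn_of_center (S : Finset (Fin 5)) (h0 : (0:Fin 5) ∈ S) :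
    (Gs.induce (S : Set (Fin 5))).Connected := by
  rw [SimpleGraph.connected_iff]
  refine ⟨?_, ⟨⟨0, by simpa using h0⟩⟩⟩
  have key : ∀ x : (S : Set (Fin 5)),
      (Gs.induce (S : Set (Fin 5))).Reachable x ⟨0, by simpa using h0⟩ := by
    rintro ⟨v, hv⟩
    by_cases hvz : v = 0
    · subst hvz; exact SimpleGraph.Reachable.refl _
    · exact SimpleGraph.Adj.reachable (by exact ⟨by simpa using hvz, Or.inr rfl⟩)
  intro x y
  exact (key x).trans (key y).symm

lemma conn_singleton (v : Fin 5) :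
    (Gs.induce (({v} : Finset (Fin 5)) : Set (Fin 5))).Connected := by
  rw [SimpleGraph.connected_iff]
  refine ⟨?_, ⟨⟨v, by simp⟩⟩⟩
  rintro ⟨a, ha⟩ ⟨b, hb⟩
  simp only [Finset.coe_singleton, Set.mem_singleton_iff] at ha hb
  subst ha; subst hb
  exact SimpleGraph.Reachable.refl _

lemma subsingleton_of_no_center (Z : Finset (Fin 5)) (h0 : (0:Fin 5) ∉ Z)
    (hc : (Gs.induce (Z : Set (Fin 5))).Connected) :
    ∀ a ∈ Z, ∀ b ∈ Z, a = b := by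
  intro a ha b hb
  have hbot : Gs.induce (Z : Set (Fin 5)) = ⊥ := by
    ext x y
    simp only [SimpleGraph.comap_adj, Function.Embedding.coe_subtype, SimpleGraph.bot_adj,
      iff_false]
    rintro ⟨-, h | h⟩
    · exact h0 (by rw [← h]; exact Finset.mem_coe.mp x.2)
    · exact h0 (by rw [← h]; exact Finset.mem_coe.mp y.2)
  have := hc.preconnected ⟨a, by simpa using ha⟩ ⟨b, by simpa using hb⟩
  rw [hbot, SimpleGraph.reachable_bot] at this
  exact congrArg Subtype.val this

lemma us_sub_le (Z : Finset (Fin 5)) (hs : ∀ a ∈ Z, ∀ b ∈ Z, a = b) : us Z ≤ 1 := by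
  rcases Finset.eq_empty_or_nonempty Z with h | ⟨a, ha⟩
  · simp [h, us]
  · have hZ : Z = {a} := Finset.eq_singleton_iff_unique_mem.mpr ⟨ha, fun b hb => hs b hb a ha⟩
    rw [hZ, us_singleton]; split <;> norm_num

lemma pmms_le_one : pmms Gs us Finset.univ ≤ 1 := by
  apply Real.sSup_le _ zero_le_one
  rintro x ⟨⟨Y, Z⟩, hp, rfl⟩
  simp only [Part2, Set.mem_setOf_eq] at hp
  obtain ⟨hu, hd, hY, hZ⟩ := hp
  rcases hY with hYe | hYc
  · refine (min_le_left _ _).trans ?_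
    rw [hYe]; simp [us]
  rcases hZ with hZe | hZc
  · refine (min_le_right _ _).trans ?_
    rw [hZe]; simp [us]
  have h0 : (0:Fin 5) ∈ Y ∪ Z := by rw [hu]; exact Finset.mem_univ _
  rcases Finset.mem_union.mp h0 with h0Y | h0Z
  · have h0Z : (0:Fin 5) ∉ Z := fun h => (Finset.disjoint_left.mp hd h0Y) h
    exact (min_le_right _ _).trans (us_sub_le Z (subsingleton_of_no_center Z h0Z hZc))
  · have h0Y : (0:Fin 5) ∉ Y := fun h => Finset.disjoint_left.mp hd h h0Z
    exact (min_le_left _ _).trans (us_sub_le Y (subsingleton_of_no_center Y h0Y hYc))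

lemma us1 : us {1} = 1 := by
  rw [us, Finset.sum_singleton, if_neg (by decide)]

lemma usBig : us ({0,2,3,4} : Finset (Fin 5)) = 3 := by
  rw [us, Finset.sum_insert (by decide), Finset.sum_insert (by decide),
    Finset.sum_insert (by decide), Finset.sum_singleton, if_pos rfl,
    if_neg (by decide), if_neg (by decide), if_neg (by decide)]
  norm_num

lemma usA : us ({2,3,4} : Finset (Fin 5)) = 3 := by
  rw [us, Finset.sum_insert (by decide), Finset.sum_insert (by decide),
    Finset.sum_singleton, if_neg (by decide), if_neg (by decide), if_neg (by decide)]
  norm_num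

lemma usB : us ({0,3,4} : Finset (Fin 5)) = 2 := by
  rw [us, Finset.sum_insert (by decide), Finset.sum_insert (by decide),
    Finset.sum_singleton, if_pos rfl, if_neg (by decide), if_neg (by decide)]
  norm_num

lemma usC : us ({0,2,4} : Finset (Fin 5)) = 2 := by
  rw [us, Finset.sum_insert (by decide), Finset.sum_insert (by decide),
    Finset.sum_singleton, if_pos rfl, if_neg (by decide), if_neg (by decide)]
  norm_num

lemma usD : us ({0,2,3} : Finset (Fin 5)) = 2 := by
  rw [us, Finset.sum_insert (by decide), Finset.sum_insert (by decide),
    Finset.sum_singleton, if_pos rfl, if_neg (by decide), if_neg (by decide)]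
  norm_num

end StarEx


open GraphFair in
/-- There exists a star instance with two agents having identical binary
additive utilities that admits a connected allocation which is PMMS but not EF1. -/
theorem exists_star_pmms_not_ef1 :
    ∃ (k : ℕ) (G : SimpleGraph (Fin k)) (u : Finset (Fin k) → ℝ)
      (A : Fin 2 → Finset (Fin k)),
      IsStar G ∧ BinaryAdditiveUtil u ∧ IsConnAlloc G A ∧
      IsAlphaPMMS G (fun _ => u) A 1 ∧ ¬ IsAlphaEF1 (fun _ => u) A 1 := by
  classical
  refine ⟨5, StarEx.Gs, StarEx.us, ![{1}, {0,2,3,4}], ?_, ?_, ?_, ?_, ?_⟩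
  · exact ⟨0, fun a b => Iff.rfl⟩
  · constructor
    · intro X
      simp only [StarEx.us, Finset.sum_singleton]
    · intro v
      rw [StarEx.us_singleton]
      by_cases h : v = 0
      · left; rw [if_pos h]
      · right; rw [if_neg h]
  · refine ⟨by decide, ?_, ?_⟩
    · intro i j hij
      fin_cases i <;> fin_cases j <;> first | (exact absurd rfl hij) | decide
    · intro i
      fin_cases i
      · exact Or.inr (StarEx.conn_singleton 1)
      · exact Or.inr (StarEx.conn_of_center _ (by decide))
  · intro i j hij _
    rw [one_mul]
    fin_cases i <;> fin_cases j <;> first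
    | exact absurd rfl hij
    | · show pmms StarEx.Gs StarEx.us (({1} : Finset (Fin 5)) ∪ {0,2,3,4}) ≤
          StarEx.us {1}
        rw [show ({1} : Finset (Fin 5)) ∪ {0,2,3,4} = Finset.univ from by decide,
          StarEx.us1]
        exact StarEx.pmms_le_one
    | · show pmms StarEx.Gs StarEx.us (({0,2,3,4} : Finset (Fin 5)) ∪ {1}) ≤
          StarEx.us {0,2,3,4}
        rw [show ({0,2,3,4} : Finset (Fin 5)) ∪ {1} = Finset.univ from by decide,
          StarEx.usBig]
        linarith [StarEx.pmms_le_one]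
  · intro h
    obtain ⟨v, hv, hle⟩ := h 0 1 (by decide) (by decide)
    have hv' : v ∈ ({0,2,3,4} : Finset (Fin 5)) := hv
    have hle' : StarEx.us (({0,2,3,4} : Finset (Fin 5)).erase v) ≤ StarEx.us {1} := by
      simpa using hle
    rw [StarEx.us1] at hle'
    fin_cases hv'
    · rw [show ({0,2,3,4} : Finset (Fin 5)).erase 0 = {2,3,4} from by decide,
        StarEx.usA] at hle'; linarith
    · rw [show ({0,2,3,4} : Finset (Fin 5)).erase 2 = {0,3,4} from by decide,
        StarEx.usB] at hle'; linarith
    · rw [show ({0,2,3,4} : Finset (Fin 5)).erase 3 = {0,2,4} from by decide,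
        StarEx.usC] at hle'; linarith
    · rw [show ({0,2,3,4} : Finset (Fin 5)).erase 4 = {0,2,3} from by decide,
        StarEx.usD] at hle'; linarith
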